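/- arXiv:2210.06639 — 3 statements merged into one kernel-verified Lean document; each statement's English description precedes it below -/
import Mathlib

section
/- Let A, X, Z_1, …, Z_K, Γ̃, U be real N×T matrices, β ∈ ℝ, δ ∈ ℝ^K, and C ≥ 0. Suppose Ỹ = Xβ + Σ_{k=1}^K Z_k δ_k + Γ̃ + U, ⟨A, X⟩_F = 1, ⟨A, Z_k⟩_F = 0 for all k = 1, …, K, and ‖Γ̃‖_* ≤ C. Then the augmented linear estimator β̂_A = ⟨A, Ỹ⟩_F satisfies |β̂_A − β − ⟨A, U⟩_F| ≤ C · s_1(A). -/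
open scoped BigOperators

noncomputable section

/-- Frobenius inner product of two real `N × T` matrices. -/
def finner {N T : ℕ} (A B : Matrix (Fin N) (Fin T) ℝ) : ℝ :=
  ∑ i, ∑ t, A i t * B i t

/-- Frobenius norm of a real `N × T` matrix. -/
def fnorm {N T : ℕ} (A : Matrix (Fin N) (Fin T) ℝ) : ℝ :=
  Real.sqrt (finner A A)

/-- The `j`-th singular value (0-indexed, in decreasing order) of a real `N × T` matrix:
the square root of the `j`-th largest eigenvalue of `A * Aᵀ`; `0` for `j ≥ N`. -/
def sval {N T : ℕ} (A : Matrix (Fin N) (Fin T) ℝ) (j : ℕ) : ℝ :=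
  if h : j < N then
    Real.sqrt
      ((Matrix.isHermitian_mul_conjTranspose_self A).eigenvalues
        (Tuple.sort ((Matrix.isHermitian_mul_conjTranspose_self A).eigenvalues)
          ((⟨j, h⟩ : Fin N).rev)))
  else 0

/-- Spectral norm: the largest singular value. -/
def s1 {N T : ℕ} (A : Matrix (Fin N) (Fin T) ℝ) : ℝ := sval A 0

/-- Nuclear norm: the sum of the singular values. -/
def nucNorm {N T : ℕ} (A : Matrix (Fin N) (Fin T) ℝ) : ℝ :=
  ∑ j ∈ Finset.range N, sval A j


open Matrix
open scoped RealInnerProductSpace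

section helpers

variable {N T : ℕ}

lemma finner_add_right (A B C : Matrix (Fin N) (Fin T) ℝ) :
    finner A (B + C) = finner A B + finner A C := by
  simp [finner, Matrix.add_apply, mul_add, Finset.sum_add_distrib]

lemma finner_smul_right (A B : Matrix (Fin N) (Fin T) ℝ) (c : ℝ) :
    finner A (c • B) = c * finner A B := by
  simp only [finner, Matrix.smul_apply, smul_eq_mul, Finset.mul_sum]
  refine Finset.sum_congr rfl fun i _ => Finset.sum_congr rfl fun t _ => by ring

lemma finner_sum_right {K : ℕ} (A : Matrix (Fin N) (Fin T) ℝ)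
    (M : Fin K → Matrix (Fin N) (Fin T) ℝ) :
    finner A (∑ k, M k) = ∑ k, finner A (M k) := by
  unfold finner
  simp only [Matrix.sum_apply, Finset.mul_sum]
  calc ∑ i, ∑ t, ∑ k, A i t * M k i t
      = ∑ i, ∑ k, ∑ t, A i t * M k i t :=
        Finset.sum_congr rfl fun i _ => Finset.sum_comm
    _ = ∑ k, ∑ i, ∑ t, A i t * M k i t := Finset.sum_comm

lemma s1_nonneg (A : Matrix (Fin N) (Fin T) ℝ) : 0 ≤ s1 A := by
  unfold s1 sval
  split
  · exact Real.sqrt_nonneg _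
  · exact le_refl 0

lemma finner_eq_trace (A B : Matrix (Fin N) (Fin T) ℝ) :
    finner A B = Matrix.trace (A * Bᵀ) := by
  simp [finner, Matrix.trace, Matrix.mul_apply, Matrix.diag]

lemma dot_self_mulVec_transpose (A : Matrix (Fin N) (Fin T) ℝ) (u : Fin N → ℝ) :
    dotProduct (Aᵀ *ᵥ u) (Aᵀ *ᵥ u) = dotProduct u ((A * Aᴴ) *ᵥ u) := by
  have h : (Aᴴ : Matrix (Fin T) (Fin N) ℝ) = Aᵀ := rfl
  rw [h, ← Matrix.mulVec_mulVec, Matrix.dotProduct_mulVec u A (Aᵀ *ᵥ u)]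
  rw [Matrix.mulVec_transpose]

/-- Rayleigh-type bound: for a unit vector `u`, `u ⬝ (A Aᵀ u) ≤ s1(A)^2`. -/
lemma rayleigh_bound (hN : 0 < N) (A : Matrix (Fin N) (Fin T) ℝ)
    (u : EuclideanSpace ℝ (Fin N)) (hu : ⟪u, u⟫ = 1) :
    dotProduct (⇑u) ((A * Aᴴ) *ᵥ ⇑u) ≤ s1 A ^ 2 := by
  set hP := Matrix.isHermitian_mul_conjTranspose_self A with hhP
  set μ := hP.eigenvalues with hμ
  set w := hP.eigenvectorBasis with hw
  set σ := Tuple.sort μ with hσ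
  have hmax : ∀ l, μ l ≤ μ (σ ((⟨0, hN⟩ : Fin N).rev)) := by
    intro l
    have h1 : σ (σ.symm l) = l := σ.apply_symm_apply l
    have h2 : σ.symm l ≤ (⟨0, hN⟩ : Fin N).rev := by
      rw [Fin.le_def]
      simp [Fin.rev]
      omega
    calc μ l = (μ ∘ σ) (σ.symm l) := by simp [h1]
      _ ≤ (μ ∘ σ) ((⟨0, hN⟩ : Fin N).rev) := Tuple.monotone_sort μ h2
      _ = μ (σ ((⟨0, hN⟩ : Fin N).rev)) := rfl
  have hs1 : s1 A ^ 2 = μ (σ ((⟨0, hN⟩ : Fin N).rev)) := by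
    have h0 : s1 A = Real.sqrt (μ (σ ((⟨0, hN⟩ : Fin N).rev))) := by
      simp [s1, sval, hN, ← hhP, ← hμ, ← hσ]
      rfl
    rw [h0, Real.sq_sqrt (Matrix.eigenvalues_self_mul_conjTranspose_nonneg A _)]
  have hinner : ∀ (x y : EuclideanSpace ℝ (Fin N)), ⟪x, y⟫ = dotProduct (⇑x) (⇑y) := by
    intro x y
    simp [PiLp.inner_apply, RCLike.inner_apply, dotProduct]
    exact Finset.sum_congr rfl fun _ _ => mul_comm _ _
  have hPu : dotProduct (⇑u) ((A * Aᴴ) *ᵥ ⇑u)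
      = ⟪u, (WithLp.toLp 2 ((A * Aᴴ) *ᵥ ⇑u) : EuclideanSpace ℝ (Fin N))⟫ := (hinner u (WithLp.toLp 2 ((A * Aᴴ) *ᵥ ⇑u))).symm
  have hexp := w.sum_inner_mul_inner u (WithLp.toLp 2 ((A * Aᴴ) *ᵥ ⇑u) : EuclideanSpace ℝ (Fin N))
  have hterm : ∀ l, ⟪w l, (WithLp.toLp 2 ((A * Aᴴ) *ᵥ ⇑u) : EuclideanSpace ℝ (Fin N))⟫ = μ l * ⟪w l, u⟫ := by
    intro l
    rw [hinner, hinner]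
    have hsym : (A * Aᴴ)ᵀ = A * Aᴴ := hP
    calc dotProduct (⇑(w l)) ((A * Aᴴ) *ᵥ ⇑u)
        = dotProduct (⇑(w l) ᵥ* (A * Aᴴ)) (⇑u) := Matrix.dotProduct_mulVec _ _ _
      _ = dotProduct ((A * Aᴴ)ᵀ *ᵥ ⇑(w l)) (⇑u) := by rw [Matrix.mulVec_transpose]
      _ = dotProduct ((A * Aᴴ) *ᵥ ⇑(w l)) (⇑u) := by rw [hsym]
      _ = dotProduct (μ l • ⇑(w l)) (⇑u) := by rw [hP.mulVec_eigenvectorBasis l]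
      _ = μ l * dotProduct (⇑(w l)) (⇑u) := by simp [smul_dotProduct]
  have hparseval := w.sum_inner_mul_inner u u
  calc dotProduct (⇑u) ((A * Aᴴ) *ᵥ ⇑u)
      = ∑ l, ⟪u, w l⟫ * (μ l * ⟪w l, u⟫) := by
        rw [hPu, ← hexp]; exact Finset.sum_congr rfl fun l _ => by rw [hterm l]
    _ = ∑ l, μ l * (⟪u, w l⟫ * ⟪w l, u⟫) :=
        Finset.sum_congr rfl fun l _ => by ring
    _ ≤ ∑ l, μ (σ ((⟨0, hN⟩ : Fin N).rev)) * (⟪u, w l⟫ * ⟪w l, u⟫) := by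
        apply Finset.sum_le_sum
        intro l _
        have hnn : 0 ≤ ⟪u, w l⟫ * ⟪w l, u⟫ := by
          rw [real_inner_comm (w l) u]; exact mul_self_nonneg _
        exact mul_le_mul_of_nonneg_right (hmax l) hnn
    _ = μ (σ ((⟨0, hN⟩ : Fin N).rev)) * ∑ l, ⟪u, w l⟫ * ⟪w l, u⟫ := by
        rw [Finset.mul_sum]
    _ = μ (σ ((⟨0, hN⟩ : Fin N).rev)) := by rw [hparseval, hu, mul_one]
    _ = s1 A ^ 2 := hs1.symm

end helpers

/-- Key duality inequality: `|⟨A,Γ⟩_F| ≤ ‖Γ‖_* ⬝ s1(A)`. -/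
lemma finner_le_nucNorm_mul_s1 {N T : ℕ} (A Γ : Matrix (Fin N) (Fin T) ℝ) :
    |finner A Γ| ≤ nucNorm Γ * s1 A := by
  rcases Nat.eq_zero_or_pos N with hN | hN
  · subst hN
    simp [finner, nucNorm]
  set hM := Matrix.isHermitian_mul_conjTranspose_self Γ with hhM
  set lam := hM.eigenvalues with hlam
  set b := hM.eigenvectorBasis with hb
  set B : Matrix (Fin N) (Fin N) ℝ := Matrix.of (fun i j => b j i) with hB
  have hBtB : Bᵀ * B = 1 := by
    ext j j'
    simp only [Matrix.mul_apply, Matrix.transpose_apply, hB, Matrix.of_apply]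
    have h1 := orthonormal_iff_ite.mp b.orthonormal j j'
    simp only [PiLp.inner_apply, RCLike.inner_apply, conj_trivial] at h1
    rw [show ∑ x, (b j).ofLp x * (b j').ofLp x = ∑ x, (b j').ofLp x * (b j).ofLp x from
      Finset.sum_congr rfl fun _ _ => mul_comm _ _, h1]
    simp [Matrix.one_apply]
  have hBBt : B * Bᵀ = 1 := mul_eq_one_comm.mp hBtB
  -- trace identity
  have htrace : finner A Γ = ∑ j, dotProduct (Aᵀ *ᵥ ⇑(b j)) (Γᵀ *ᵥ ⇑(b j)) := by
    have h1 : ∀ j, dotProduct (Aᵀ *ᵥ ⇑(b j)) (Γᵀ *ᵥ ⇑(b j))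
        = ∑ t, (Aᵀ * B) t j * (Γᵀ * B) t j := by
      intro j
      simp [dotProduct, Matrix.mulVec, Matrix.mul_apply, hB, dotProduct]
    rw [Finset.sum_congr rfl fun j _ => h1 j]
    rw [Finset.sum_comm]
    have h2 : ∑ t, ∑ j, (Aᵀ * B) t j * (Γᵀ * B) t j = finner (Aᵀ * B) (Γᵀ * B) := rfl
    rw [h2, finner_eq_trace, finner_eq_trace, Matrix.transpose_mul,
      Matrix.mul_assoc, ← Matrix.mul_assoc B, hBBt, Matrix.one_mul,
      Matrix.transpose_transpose]
    rw [Matrix.trace_mul_comm, ← Matrix.trace_transpose (Γᵀ * A), Matrix.transpose_mul,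
      Matrix.transpose_transpose]
  have hunit : ∀ j, dotProduct (⇑(b j)) (⇑(b j)) = 1 := by
    intro j
    have h3 := orthonormal_iff_ite.mp b.orthonormal j j
    simp only [PiLp.inner_apply, RCLike.inner_apply, conj_trivial, if_pos rfl] at h3
    simpa [dotProduct] using h3
  have hΓnorm : ∀ j, dotProduct (Γᵀ *ᵥ ⇑(b j)) (Γᵀ *ᵥ ⇑(b j)) = lam j := by
    intro j
    rw [dot_self_mulVec_transpose]
    rw [show (Γ * Γᴴ) *ᵥ ⇑(b j) = lam j • ⇑(b j) from hM.mulVec_eigenvectorBasis j]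
    rw [dotProduct_smul, smul_eq_mul, hunit j, mul_one]
  have hAnorm : ∀ j, dotProduct (Aᵀ *ᵥ ⇑(b j)) (Aᵀ *ᵥ ⇑(b j)) ≤ s1 A ^ 2 := by
    intro j
    rw [dot_self_mulVec_transpose]
    have hu : ⟪b j, b j⟫ = (1:ℝ) := by
      have h3 := orthonormal_iff_ite.mp b.orthonormal j j
      simpa using h3
    exact rayleigh_bound hN A (b j) hu
  -- Cauchy-Schwarz per term
  have hCS : ∀ j, |dotProduct (Aᵀ *ᵥ ⇑(b j)) (Γᵀ *ᵥ ⇑(b j))| ≤ s1 A * Real.sqrt (lam j) := by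
    intro j
    set f : Fin T → ℝ := Aᵀ *ᵥ ⇑(b j) with hf
    set g : Fin T → ℝ := Γᵀ *ᵥ ⇑(b j) with hg
    have hcs := Finset.sum_mul_sq_le_sq_mul_sq Finset.univ f g
    have hdot : dotProduct f g = ∑ t, f t * g t := rfl
    have hff : ∑ t, f t ^ 2 = dotProduct f f := by
      simp [dotProduct, sq]
    have hgg : ∑ t, g t ^ 2 = dotProduct g g := by
      simp [dotProduct, sq]
    have h1 : (dotProduct f g) ^ 2 ≤ s1 A ^ 2 * lam j := by
      rw [hdot]
      calc (∑ t, f t * g t) ^ 2 ≤ (∑ t, f t ^ 2) * ∑ t, g t ^ 2 := hcs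
        _ = dotProduct f f * dotProduct g g := by rw [hff, hgg]
        _ ≤ s1 A ^ 2 * lam j := by
            have hg2 : dotProduct g g = lam j := hΓnorm j
            have hgnn : 0 ≤ dotProduct g g := by
              simp only [dotProduct]
              exact Finset.sum_nonneg fun t _ => mul_self_nonneg _
            have hfnn : 0 ≤ dotProduct f f := by
              simp only [dotProduct]
              exact Finset.sum_nonneg fun t _ => mul_self_nonneg _
            rw [hg2] at hgnn ⊢
            exact mul_le_mul (hAnorm j) le_rfl hgnn (sq_nonneg _)
    have h2 : |dotProduct f g| = Real.sqrt ((dotProduct f g) ^ 2) := by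
      rw [Real.sqrt_sq_eq_abs]
    rw [h2]
    calc Real.sqrt ((dotProduct f g) ^ 2) ≤ Real.sqrt (s1 A ^ 2 * lam j) :=
          Real.sqrt_le_sqrt h1
      _ = Real.sqrt (s1 A ^ 2) * Real.sqrt (lam j) := Real.sqrt_mul (sq_nonneg _) _
      _ = s1 A * Real.sqrt (lam j) := by rw [Real.sqrt_sq (s1_nonneg A)]
  -- nuclear norm as sum of sqrt of eigenvalues
  have hnuc : nucNorm Γ = ∑ j, Real.sqrt (lam j) := by
    unfold nucNorm
    rw [← Fin.sum_univ_eq_sum_range (fun j => sval Γ j) N]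
    have h1 : ∀ j : Fin N, sval Γ (j : ℕ)
        = Real.sqrt (lam (Tuple.sort lam j.rev)) := by
      intro j
      simp [sval, j.isLt, ← hhM, ← hlam, Fin.eta]
      rfl
    rw [Finset.sum_congr rfl fun j _ => h1 j]
    exact Equiv.sum_comp ((Fin.revPerm).trans (Tuple.sort lam)) (fun l => Real.sqrt (lam l))
  -- assemble
  calc |finner A Γ| = |∑ j, dotProduct (Aᵀ *ᵥ ⇑(b j)) (Γᵀ *ᵥ ⇑(b j))| := by rw [htrace]
    _ ≤ ∑ j, |dotProduct (Aᵀ *ᵥ ⇑(b j)) (Γᵀ *ᵥ ⇑(b j))| := Finset.abs_sum_le_sum_abs _ _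
    _ ≤ ∑ j, s1 A * Real.sqrt (lam j) := Finset.sum_le_sum fun j _ => hCS j
    _ = nucNorm Γ * s1 A := by
        rw [hnuc, Finset.sum_mul]
        exact Finset.sum_congr rfl fun j _ => by ring


/-- If `Ỹ = Xβ + Σ_k Z_k δ_k + Γ̃ + U`, the weights satisfy `⟨A,X⟩_F = 1` and `⟨A,Z_k⟩_F = 0`,
and `‖Γ̃‖_* ≤ C`, then the augmented linear estimator `β̂_A = ⟨A,Ỹ⟩_F` satisfies
`|β̂_A − β − ⟨A,U⟩_F| ≤ C · s₁(A)`. -/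
theorem augmented_linear_estimator_bias_bound {N T K : ℕ}
    (A X : Matrix (Fin N) (Fin T) ℝ) (Z : Fin K → Matrix (Fin N) (Fin T) ℝ)
    (Γtil U Ytil : Matrix (Fin N) (Fin T) ℝ)
    (β : ℝ) (δ : Fin K → ℝ) (C : ℝ) (hC : 0 ≤ C)
    (hY : Ytil = β • X + ∑ k, δ k • Z k + Γtil + U)
    (hAX : finner A X = 1) (hAZ : ∀ k, finner A (Z k) = 0)
    (hΓ : nucNorm Γtil ≤ C) :
    |finner A Ytil - β - finner A U| ≤ C * s1 A := by
  have hexpand : finner A Ytil = β + finner A Γtil + finner A U := by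
    rw [hY, finner_add_right, finner_add_right, finner_add_right, finner_smul_right,
      finner_sum_right, hAX]
    simp [finner_smul_right, hAZ]
  have h1 : finner A Ytil - β - finner A U = finner A Γtil := by rw [hexpand]; ring
  rw [h1]
  calc |finner A Γtil| ≤ nucNorm Γtil * s1 A := finner_le_nucNorm_mul_s1 A Γtil
    _ ≤ C * s1 A := mul_le_mul_of_nonneg_right hΓ (s1_nonneg A)


end
end

section
/- Let X, Z_1, …, Z_K, Γ, U be real N×T matrices with rank(Γ) ≤ R, let β, β̂ ∈ ℝ and δ, δ̂ ∈ ℝ^K, and set Y = Xβ + Σ_{k=1}^K Z_k δ_k + Γ + U. Suppose Γ̂ minimizes ‖Y − Xβ̂ − Σ_{k=1}^K Z_k δ̂_k − G‖_F² over all real N×T matrices G with rank(G) ≤ R. Then ‖Γ̂ − Γ‖_* ≤ 4R · ( s_1(U) + s_1(X)·|β̂ − β| + Σ_{k=1}^K s_1(Z_k)·|δ̂_k − δ_k| ). -/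
open scoped BigOperators

noncomputable section

namespace NNBound

open Matrix

variable {N T : ℕ}

/-! ### dot product basics -/

lemma dot_self_nonneg {n : ℕ} (x : Fin n → ℝ) : 0 ≤ x ⬝ᵥ x :=
  Finset.sum_nonneg fun i _ => mul_self_nonneg _

lemma dot_le_sqrt {n : ℕ} (x y : Fin n → ℝ) :
    x ⬝ᵥ y ≤ Real.sqrt (x ⬝ᵥ x) * Real.sqrt (y ⬝ᵥ y) := by
  have h := Finset.sum_mul_sq_le_sq_mul_sq Finset.univ x y
  have h1 : x ⬝ᵥ y ≤ |x ⬝ᵥ y| := le_abs_self _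
  have h2 : |x ⬝ᵥ y| = Real.sqrt ((x ⬝ᵥ y)^2) := (Real.sqrt_sq_eq_abs _).symm
  calc x ⬝ᵥ y ≤ Real.sqrt ((x ⬝ᵥ y)^2) := h2 ▸ h1
    _ ≤ Real.sqrt ((∑ i, x i ^2) * (∑ i, y i ^2)) := Real.sqrt_le_sqrt h
    _ = Real.sqrt (x ⬝ᵥ x) * Real.sqrt (y ⬝ᵥ y) := by
        rw [Real.sqrt_mul (Finset.sum_nonneg fun i _ => sq_nonneg _)]
        simp [dotProduct, pow_two]

lemma euclid_inner (x y : EuclideanSpace ℝ (Fin N)) : (inner ℝ x y : ℝ) = (⇑x) ⬝ᵥ (⇑y) := by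
  simp [PiLp.inner_apply, dotProduct, RCLike.inner_apply, mul_comm]

/-! ### eigenvalue machinery -/

def lam (A : Matrix (Fin N) (Fin T) ℝ) : Fin N → ℝ :=
  (Matrix.isHermitian_mul_conjTranspose_self A).eigenvalues

def qv (A : Matrix (Fin N) (Fin T) ℝ) (i : Fin N) : EuclideanSpace ℝ (Fin N) :=
  (Matrix.isHermitian_mul_conjTranspose_self A).eigenvectorBasis i

lemma lam_nonneg (A : Matrix (Fin N) (Fin T) ℝ) (i : Fin N) : 0 ≤ lam A i :=
  Matrix.eigenvalues_self_mul_conjTranspose_nonneg A i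

lemma mulVec_qv (A : Matrix (Fin N) (Fin T) ℝ) (i : Fin N) :
    (A * Aᴴ) *ᵥ ⇑(qv A i) = lam A i • ⇑(qv A i) :=
  (Matrix.isHermitian_mul_conjTranspose_self A).mulVec_eigenvectorBasis i

lemma qv_dot (A : Matrix (Fin N) (Fin T) ℝ) (i j : Fin N) :
    (⇑(qv A i)) ⬝ᵥ (⇑(qv A j)) = if i = j then (1:ℝ) else 0 := by
  rw [← euclid_inner]
  have h := (Matrix.isHermitian_mul_conjTranspose_self A).eigenvectorBasis.orthonormal
  rw [orthonormal_iff_ite] at h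
  exact h i j

lemma transpose_gram (A : Matrix (Fin N) (Fin T) ℝ) : (A * Aᴴ)ᵀ = A * Aᴴ := by
  have h := (Matrix.isHermitian_mul_conjTranspose_self A)
  have h2 : (A * Aᴴ)ᴴ = (A * Aᴴ)ᵀ := by ext i j; simp [conjTranspose_apply]
  rw [← h2]; exact h

lemma sval_nonneg (A : Matrix (Fin N) (Fin T) ℝ) (j : ℕ) : 0 ≤ sval A j := by
  rw [sval]; split
  · exact Real.sqrt_nonneg _
  · exact le_refl _

lemma s1_nonneg (A : Matrix (Fin N) (Fin T) ℝ) : 0 ≤ s1 A := sval_nonneg A 0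

lemma nucNorm_nonneg (A : Matrix (Fin N) (Fin T) ℝ) : 0 ≤ nucNorm A :=
  Finset.sum_nonneg fun j _ => sval_nonneg A j

/-- index achieving the top eigenvalue -/
def topIdx (A : Matrix (Fin N) (Fin T) ℝ) (h : 0 < N) : Fin N :=
  Tuple.sort (lam A) ((⟨0, h⟩ : Fin N).rev)

lemma s1_eq (A : Matrix (Fin N) (Fin T) ℝ) (h : 0 < N) :
    s1 A = Real.sqrt (lam A (topIdx A h)) := by
  rw [s1, sval, dif_pos h]; rfl

lemma lam_le_top (A : Matrix (Fin N) (Fin T) ℝ) (i : Fin N) :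
    lam A i ≤ lam A (topIdx A i.pos) := by
  have hmono := Tuple.monotone_sort (lam A)
  have h1 : i = Tuple.sort (lam A) ((Tuple.sort (lam A)).symm i) := (Equiv.apply_symm_apply _ _).symm
  calc lam A i = (lam A ∘ Tuple.sort (lam A)) ((Tuple.sort (lam A)).symm i) := by
        rw [Function.comp_apply, ← h1]
    _ ≤ (lam A ∘ Tuple.sort (lam A)) ((⟨0, i.pos⟩ : Fin N).rev) := by
        apply hmono
        have hb := ((Tuple.sort (lam A)).symm i).is_lt
        simp only [Fin.le_def, Fin.val_rev, Fin.val_mk]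
        omega
    _ = lam A (topIdx A i.pos) := rfl

lemma lam_le_s1_sq (A : Matrix (Fin N) (Fin T) ℝ) (i : Fin N) : lam A i ≤ s1 A ^ 2 := by
  rw [s1_eq A i.pos, Real.sq_sqrt (lam_nonneg _ _)]
  exact lam_le_top A i

lemma s1_sq_eq (A : Matrix (Fin N) (Fin T) ℝ) (h : 0 < N) :
    s1 A ^ 2 = lam A (topIdx A h) := by
  rw [s1_eq A h, Real.sq_sqrt (lam_nonneg _ _)]

/-- expansion of the quadratic form of the Gram matrix via the eigenbasis -/
lemma dot_mulVec_gram (A : Matrix (Fin N) (Fin T) ℝ) (x : Fin N → ℝ) :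
    x ⬝ᵥ ((A * Aᴴ) *ᵥ x) = ∑ j, lam A j * ((⇑(qv A j)) ⬝ᵥ x) ^ 2 := by
  set M := A * Aᴴ with hM
  set x' : EuclideanSpace ℝ (Fin N) := (WithLp.equiv 2 _).symm x with hx'
  set y' : EuclideanSpace ℝ (Fin N) := (WithLp.equiv 2 _).symm (M *ᵥ x) with hy'
  have hb := ((Matrix.isHermitian_mul_conjTranspose_self A).eigenvectorBasis).sum_inner_mul_inner x' y'
  have hcoe : ∀ j, (Matrix.isHermitian_mul_conjTranspose_self A).eigenvectorBasis j = qv A j :=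
    fun j => rfl
  have hx : (⇑x' : Fin N → ℝ) = x := rfl
  have hy : (⇑y' : Fin N → ℝ) = M *ᵥ x := rfl
  have lhs : x ⬝ᵥ (M *ᵥ x) = (inner ℝ x' y' : ℝ) := by rw [euclid_inner, hx, hy]
  rw [lhs, ← hb]
  apply Finset.sum_congr rfl
  intro j _
  rw [hcoe, euclid_inner, euclid_inner, hx, hy]
  have h1 : (⇑(qv A j)) ⬝ᵥ (M *ᵥ x) = lam A j * ((⇑(qv A j)) ⬝ᵥ x) := by
    rw [show (⇑(qv A j)) ⬝ᵥ (M *ᵥ x) = (Mᵀ *ᵥ ⇑(qv A j)) ⬝ᵥ x by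
      rw [mulVec_transpose, ← dotProduct_mulVec]]
    rw [hM, transpose_gram, mulVec_qv, smul_dotProduct]
    rfl
  rw [h1, dotProduct_comm x]
  ring

lemma sum_sq_coeff (A : Matrix (Fin N) (Fin T) ℝ) (x : Fin N → ℝ) :
    ∑ j, ((⇑(qv A j)) ⬝ᵥ x) ^ 2 = x ⬝ᵥ x := by
  set x' : EuclideanSpace ℝ (Fin N) := (WithLp.equiv 2 _).symm x with hx'
  have hb := ((Matrix.isHermitian_mul_conjTranspose_self A).eigenvectorBasis).sum_inner_mul_inner x' x'
  have hx : (⇑x' : Fin N → ℝ) = x := rfl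
  rw [euclid_inner, hx] at hb
  rw [← hb]
  apply Finset.sum_congr rfl
  intro j _
  rw [show (Matrix.isHermitian_mul_conjTranspose_self A).eigenvectorBasis j = qv A j from rfl,
    euclid_inner, euclid_inner, hx, dotProduct_comm x]
  ring

/-- Rayleigh bound -/
lemma rayleigh (A : Matrix (Fin N) (Fin T) ℝ) (x : Fin N → ℝ) :
    x ⬝ᵥ ((A * Aᴴ) *ᵥ x) ≤ s1 A ^ 2 * (x ⬝ᵥ x) := by
  rw [dot_mulVec_gram, ← sum_sq_coeff A x, Finset.mul_sum]
  apply Finset.sum_le_sum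
  intro j _
  exact mul_le_mul_of_nonneg_right (lam_le_s1_sq A j) (sq_nonneg _)

lemma gram_dot_eq (A : Matrix (Fin N) (Fin T) ℝ) (x : Fin N → ℝ) :
    (Aᴴ *ᵥ x) ⬝ᵥ (Aᴴ *ᵥ x) = x ⬝ᵥ ((A * Aᴴ) *ᵥ x) := by
  have hA : Aᴴ = Aᵀ := by ext i j; simp [conjTranspose_apply]
  rw [← mulVec_mulVec, dotProduct_mulVec x A, ← mulVec_transpose, hA]

/-- operator norm bound -/
lemma opBound (A : Matrix (Fin N) (Fin T) ℝ) (x : Fin N → ℝ) (y : Fin T → ℝ) :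
    x ⬝ᵥ (A *ᵥ y) ≤ s1 A * (Real.sqrt (x ⬝ᵥ x) * Real.sqrt (y ⬝ᵥ y)) := by
  have hA : Aᴴ = Aᵀ := by ext i j; simp [conjTranspose_apply]
  have h0 : x ⬝ᵥ (A *ᵥ y) = (Aᴴ *ᵥ x) ⬝ᵥ y := by
    rw [hA, mulVec_transpose, ← dotProduct_mulVec]
  have h1 := dot_le_sqrt (Aᴴ *ᵥ x) y
  have h2 : (Aᴴ *ᵥ x) ⬝ᵥ (Aᴴ *ᵥ x) ≤ s1 A ^ 2 * (x ⬝ᵥ x) := by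
    rw [gram_dot_eq]; exact rayleigh A x
  have h3 : Real.sqrt ((Aᴴ *ᵥ x) ⬝ᵥ (Aᴴ *ᵥ x)) ≤ s1 A * Real.sqrt (x ⬝ᵥ x) := by
    calc Real.sqrt ((Aᴴ *ᵥ x) ⬝ᵥ (Aᴴ *ᵥ x)) ≤ Real.sqrt (s1 A ^ 2 * (x ⬝ᵥ x)) :=
          Real.sqrt_le_sqrt h2
      _ = s1 A * Real.sqrt (x ⬝ᵥ x) := by
          rw [Real.sqrt_mul (sq_nonneg _), Real.sqrt_sq (s1_nonneg A)]
  calc x ⬝ᵥ (A *ᵥ y) = (Aᴴ *ᵥ x) ⬝ᵥ y := h0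
    _ ≤ Real.sqrt ((Aᴴ *ᵥ x) ⬝ᵥ (Aᴴ *ᵥ x)) * Real.sqrt (y ⬝ᵥ y) := h1
    _ ≤ (s1 A * Real.sqrt (x ⬝ᵥ x)) * Real.sqrt (y ⬝ᵥ y) :=
        mul_le_mul_of_nonneg_right h3 (Real.sqrt_nonneg _)
    _ = s1 A * (Real.sqrt (x ⬝ᵥ x) * Real.sqrt (y ⬝ᵥ y)) := by ring

/-! ### subadditivity of `s1` -/

lemma sq_le_sq_of_nonneg {a b : ℝ} (ha : 0 ≤ a) (hb : 0 ≤ b) (h : a ^ 2 ≤ b ^ 2) : a ≤ b := by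
  nlinarith

lemma s1_zero_N (h : ¬ 0 < N) (A : Matrix (Fin N) (Fin T) ℝ) : s1 A = 0 := by
  rw [s1, sval, dif_neg (by omega)]

lemma qv_unit (A : Matrix (Fin N) (Fin T) ℝ) (j : Fin N) :
    (⇑(qv A j)) ⬝ᵥ (⇑(qv A j)) = 1 := by
  rw [qv_dot, if_pos rfl]

lemma lam_as_dot (A : Matrix (Fin N) (Fin T) ℝ) (j : Fin N) :
    (⇑(qv A j)) ⬝ᵥ ((A * Aᴴ) *ᵥ ⇑(qv A j)) = lam A j := by
  rw [mulVec_qv, dotProduct_smul, qv_unit]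
  simp

lemma s1_smul_le (c : ℝ) (A : Matrix (Fin N) (Fin T) ℝ) : s1 (c • A) ≤ |c| * s1 A := by
  by_cases h : 0 < N
  · apply sq_le_sq_of_nonneg (s1_nonneg _) (mul_nonneg (abs_nonneg c) (s1_nonneg A))
    rw [s1_sq_eq (c • A) h, ← lam_as_dot (c • A) (topIdx (c • A) h)]
    set q := ⇑(qv (c • A) (topIdx (c • A) h)) with hq
    have hM : (c • A) * (c • A)ᴴ = (c * c) • (A * Aᴴ) := by
      rw [conjTranspose_smul]
      simp [smul_mul_assoc, Matrix.mul_smul, smul_smul]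
    rw [hM, smul_mulVec, dotProduct_smul, smul_eq_mul]
    have hq1 : q ⬝ᵥ q = 1 := qv_unit _ _
    have h2 : q ⬝ᵥ ((A * Aᴴ) *ᵥ q) ≤ s1 A ^ 2 := by
      calc q ⬝ᵥ ((A * Aᴴ) *ᵥ q) ≤ s1 A ^ 2 * (q ⬝ᵥ q) := rayleigh A q
        _ = s1 A ^ 2 := by rw [hq1, mul_one]
    calc (c * c) * (q ⬝ᵥ ((A * Aᴴ) *ᵥ q)) ≤ (c * c) * s1 A ^ 2 :=
          mul_le_mul_of_nonneg_left h2 (mul_self_nonneg c)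
      _ = (|c| * s1 A) ^ 2 := by rw [mul_pow, sq_abs]; ring
  · rw [s1_zero_N h, s1_zero_N h]
    simp [mul_nonneg (abs_nonneg c) (le_refl (0:ℝ))]

lemma s1_add_le (A B : Matrix (Fin N) (Fin T) ℝ) : s1 (A + B) ≤ s1 A + s1 B := by
  by_cases h : 0 < N
  · apply sq_le_sq_of_nonneg (s1_nonneg _) (add_nonneg (s1_nonneg A) (s1_nonneg B))
    rw [s1_sq_eq (A + B) h, ← lam_as_dot (A + B) (topIdx (A + B) h)]
    set q := ⇑(qv (A + B) (topIdx (A + B) h)) with hq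
    have hq1 : q ⬝ᵥ q = 1 := qv_unit _ _
    rw [← gram_dot_eq]
    have hAB : (A + B)ᴴ *ᵥ q = Aᴴ *ᵥ q + Bᴴ *ᵥ q := by
      rw [conjTranspose_add, add_mulVec]
    set u := Aᴴ *ᵥ q with hu
    set v := Bᴴ *ᵥ q with hv
    have hu2 : u ⬝ᵥ u ≤ s1 A ^ 2 := by
      rw [hu, gram_dot_eq]
      calc q ⬝ᵥ ((A * Aᴴ) *ᵥ q) ≤ s1 A ^ 2 * (q ⬝ᵥ q) := rayleigh A q
        _ = s1 A ^ 2 := by rw [hq1, mul_one]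
    have hv2 : v ⬝ᵥ v ≤ s1 B ^ 2 := by
      rw [hv, gram_dot_eq]
      calc q ⬝ᵥ ((B * Bᴴ) *ᵥ q) ≤ s1 B ^ 2 * (q ⬝ᵥ q) := rayleigh B q
        _ = s1 B ^ 2 := by rw [hq1, mul_one]
    have hru : Real.sqrt (u ⬝ᵥ u) ≤ s1 A := by
      calc Real.sqrt (u ⬝ᵥ u) ≤ Real.sqrt (s1 A ^ 2) := Real.sqrt_le_sqrt hu2
        _ = s1 A := Real.sqrt_sq (s1_nonneg A)
    have hrv : Real.sqrt (v ⬝ᵥ v) ≤ s1 B := by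
      calc Real.sqrt (v ⬝ᵥ v) ≤ Real.sqrt (s1 B ^ 2) := Real.sqrt_le_sqrt hv2
        _ = s1 B := Real.sqrt_sq (s1_nonneg B)
    have hcs := dot_le_sqrt u v
    have hsqu := Real.sq_sqrt (dot_self_nonneg u)
    have hsqv := Real.sq_sqrt (dot_self_nonneg v)
    have hexp : (u + v) ⬝ᵥ (u + v) = u ⬝ᵥ u + 2 * (u ⬝ᵥ v) + v ⬝ᵥ v := by
      rw [add_dotProduct, dotProduct_add, dotProduct_add, dotProduct_comm v u]
      ring
    rw [hAB, hexp]
    nlinarith [Real.sqrt_nonneg (u ⬝ᵥ u), Real.sqrt_nonneg (v ⬝ᵥ v), s1_nonneg A, s1_nonneg B]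
  · rw [s1_zero_N h, s1_zero_N h, s1_zero_N h]
    norm_num

lemma s1_zero : s1 (0 : Matrix (Fin N) (Fin T) ℝ) = 0 := by
  by_cases h : 0 < N
  · have h2 : s1 (0 : Matrix (Fin N) (Fin T) ℝ) ^ 2 = 0 := by
      rw [s1_sq_eq _ h, ← lam_as_dot _ (topIdx (0 : Matrix (Fin N) (Fin T) ℝ) h)]
      simp
    have := s1_nonneg (0 : Matrix (Fin N) (Fin T) ℝ)
    nlinarith
  · exact s1_zero_N h _

lemma s1_sum_le {K : ℕ} (C : Fin K → Matrix (Fin N) (Fin T) ℝ) :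
    s1 (∑ k, C k) ≤ ∑ k, s1 (C k) := by
  classical
  induction (Finset.univ : Finset (Fin K)) using Finset.induction_on with
  | empty => simp [s1_zero]
  | insert a s hnot ih =>
      rw [Finset.sum_insert hnot, Finset.sum_insert hnot]
      calc s1 (C a + ∑ k ∈ s, C k) ≤ s1 (C a) + s1 (∑ k ∈ s, C k) := s1_add_le _ _
        _ ≤ s1 (C a) + ∑ k ∈ s, s1 (C k) := by linarith [ih]

/-! ### trace, von Neumann inequality, nuclear norm bounds -/

lemma finner_self_nonneg (A : Matrix (Fin N) (Fin T) ℝ) : 0 ≤ finner A A :=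
  Finset.sum_nonneg fun i _ => Finset.sum_nonneg fun t _ => mul_self_nonneg _

lemma fnorm_nonneg (A : Matrix (Fin N) (Fin T) ℝ) : 0 ≤ fnorm A := Real.sqrt_nonneg _

lemma sq_fnorm (A : Matrix (Fin N) (Fin T) ℝ) : fnorm A ^ 2 = finner A A :=
  Real.sq_sqrt (finner_self_nonneg A)

lemma finner_add_left (A B C : Matrix (Fin N) (Fin T) ℝ) :
    finner (A + B) C = finner A C + finner B C := by
  simp [finner, Matrix.add_apply, add_mul, Finset.sum_add_distrib]

lemma finner_comm (A B : Matrix (Fin N) (Fin T) ℝ) : finner A B = finner B A := by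
  simp [finner, mul_comm]

lemma finner_neg_left (A B : Matrix (Fin N) (Fin T) ℝ) : finner (-A) B = - finner A B := by
  simp [finner, Matrix.neg_apply, neg_mul, Finset.sum_neg_distrib]

lemma finner_neg_neg (A B : Matrix (Fin N) (Fin T) ℝ) : finner (-A) (-B) = finner A B := by
  simp [finner, Matrix.neg_apply]

lemma finner_expand (P E : Matrix (Fin N) (Fin T) ℝ) :
    finner (P + E) (P + E) = finner P P + 2 * finner P E + finner E E := by
  rw [finner_add_left, finner_comm P (P + E), finner_add_left, finner_comm E (P + E),
    finner_add_left, finner_comm P P, finner_comm E P, finner_comm E E]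
  ring

lemma finner_eq_trace (D E : Matrix (Fin N) (Fin T) ℝ) :
    finner D E = Matrix.trace (E * Dᴴ) := by
  simp [finner, Matrix.trace, Matrix.diag, Matrix.mul_apply, conjTranspose_apply, mul_comm]

lemma trace_eq_sum_qv (D : Matrix (Fin N) (Fin T) ℝ) (B : Matrix (Fin N) (Fin N) ℝ) :
    Matrix.trace B = ∑ j, (⇑(qv D j)) ⬝ᵥ (B *ᵥ ⇑(qv D j)) := by
  classical
  set hM := Matrix.isHermitian_mul_conjTranspose_self D with hMdef
  set Q : Matrix (Fin N) (Fin N) ℝ :=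
    (Matrix.IsHermitian.eigenvectorUnitary hM : Matrix (Fin N) (Fin N) ℝ) with hQdef
  have hQ : Q * star Q = 1 :=
    Matrix.mem_unitaryGroup_iff.mp (Matrix.IsHermitian.eigenvectorUnitary hM).2
  have h1 : Matrix.trace B = Matrix.trace (star Q * (B * Q)) := by
    rw [Matrix.trace_mul_comm, Matrix.mul_assoc B Q (star Q), hQ, Matrix.mul_one]
  rw [h1, Matrix.trace]
  apply Finset.sum_congr rfl
  intro j _
  have hQapp : ∀ a, Q a j = (⇑(qv D j)) a := fun a => rfl
  simp only [Matrix.diag_apply, Matrix.mul_apply, Matrix.star_apply, star_trivial,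
    Matrix.mulVec, dotProduct, hQapp, Finset.mul_sum]

lemma nucNorm_eq_sum_sqrt (D : Matrix (Fin N) (Fin T) ℝ) :
    nucNorm D = ∑ j, Real.sqrt (lam D j) := by
  rw [nucNorm, ← Fin.sum_univ_eq_sum_range (fun j => sval D j) N]
  have h : ∀ j : Fin N, sval D (j : ℕ) =
      Real.sqrt (lam D ((Fin.revPerm.trans (Tuple.sort (lam D))) j)) := by
    intro j
    rw [sval, dif_pos j.isLt]
    rfl
  rw [Finset.sum_congr rfl (fun j _ => h j)]
  exact Equiv.sum_comp (Fin.revPerm.trans (Tuple.sort (lam D))) (fun i => Real.sqrt (lam D i))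

/-- von Neumann-type inequality -/
lemma finner_le_nuc_s1 (D E : Matrix (Fin N) (Fin T) ℝ) :
    finner D E ≤ nucNorm D * s1 E := by
  rw [finner_eq_trace, trace_eq_sum_qv D]
  have hterm : ∀ j, (⇑(qv D j)) ⬝ᵥ ((E * Dᴴ) *ᵥ ⇑(qv D j)) ≤ Real.sqrt (lam D j) * s1 E := by
    intro j
    rw [← mulVec_mulVec]
    have h := opBound E (⇑(qv D j)) (Dᴴ *ᵥ ⇑(qv D j))
    rw [qv_unit, Real.sqrt_one, one_mul] at h
    have hw : (Dᴴ *ᵥ ⇑(qv D j)) ⬝ᵥ (Dᴴ *ᵥ ⇑(qv D j)) = lam D j := by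
      rw [gram_dot_eq, lam_as_dot]
    rw [hw] at h
    linarith [h]
  calc ∑ j, (⇑(qv D j)) ⬝ᵥ ((E * Dᴴ) *ᵥ ⇑(qv D j))
      ≤ ∑ j, Real.sqrt (lam D j) * s1 E := Finset.sum_le_sum (fun j _ => hterm j)
    _ = (∑ j, Real.sqrt (lam D j)) * s1 E := by rw [Finset.sum_mul]
    _ = nucNorm D * s1 E := by rw [nucNorm_eq_sum_sqrt]

lemma trace_gram (D : Matrix (Fin N) (Fin T) ℝ) :
    Matrix.trace (D * Dᴴ) = ∑ j, lam D j := by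
  rw [trace_eq_sum_qv D]
  exact Finset.sum_congr rfl fun j _ => lam_as_dot D j

lemma finner_self_eq_sum_lam (D : Matrix (Fin N) (Fin T) ℝ) :
    finner D D = ∑ j, lam D j := by
  rw [finner_eq_trace, trace_gram]

lemma nucNorm_le_sqrt_rank (D : Matrix (Fin N) (Fin T) ℝ) :
    nucNorm D ≤ Real.sqrt (D.rank) * fnorm D := by
  classical
  rw [nucNorm_eq_sum_sqrt]
  set s : Finset (Fin N) := Finset.univ.filter (fun j => lam D j ≠ 0) with hs
  have h1 : ∑ j, Real.sqrt (lam D j) = ∑ j ∈ s, Real.sqrt (lam D j) := by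
    rw [hs]
    refine (Finset.sum_filter_of_ne ?_).symm
    intro x _ hx h0
    exact hx (by rw [h0, Real.sqrt_zero])
  have hcs := Finset.sum_mul_sq_le_sq_mul_sq s (fun _ => (1:ℝ)) (fun j => Real.sqrt (lam D j))
  simp only [one_mul, one_pow] at hcs
  have hsq : ∀ j, (Real.sqrt (lam D j))^2 = lam D j := fun j => Real.sq_sqrt (lam_nonneg D j)
  have h2 : ∑ j ∈ s, (Real.sqrt (lam D j))^2 ≤ ∑ j, lam D j := by
    rw [Finset.sum_congr rfl fun j _ => hsq j]
    exact Finset.sum_le_sum_of_subset_of_nonneg (Finset.filter_subset _ _)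
      (fun j _ _ => lam_nonneg D j)
  have hcard : s.card = D.rank := by
    rw [← Matrix.rank_self_mul_conjTranspose D,
      (Matrix.isHermitian_mul_conjTranspose_self D).rank_eq_card_non_zero_eigs,
      Fintype.card_subtype, hs]
    first
    | (simp only [lam]; congr!)
    | simp only [lam]
  have hfn : fnorm D ^ 2 = ∑ j, lam D j := by
    rw [sq_fnorm, finner_self_eq_sum_lam]
  have hnn : 0 ≤ ∑ j ∈ s, Real.sqrt (lam D j) :=
    Finset.sum_nonneg fun j _ => Real.sqrt_nonneg _
  have hkey : (∑ j ∈ s, Real.sqrt (lam D j))^2 ≤ (D.rank : ℝ) * fnorm D ^ 2 := by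
    have hc1 : (∑ _j ∈ s, (1:ℝ)) = (s.card : ℝ) := by simp
    calc (∑ j ∈ s, Real.sqrt (lam D j))^2
        ≤ (∑ _j ∈ s, (1:ℝ)) * ∑ j ∈ s, (Real.sqrt (lam D j))^2 := hcs
      _ = (s.card : ℝ) * ∑ j ∈ s, (Real.sqrt (lam D j))^2 := by rw [hc1]
      _ ≤ (D.rank : ℝ) * (∑ j, lam D j) := by
          rw [hcard]
          exact mul_le_mul_of_nonneg_left h2 (Nat.cast_nonneg _)
      _ = (D.rank : ℝ) * fnorm D ^ 2 := by rw [hfn]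
  rw [h1]
  calc ∑ j ∈ s, Real.sqrt (lam D j)
      = Real.sqrt ((∑ j ∈ s, Real.sqrt (lam D j))^2) := (Real.sqrt_sq hnn).symm
    _ ≤ Real.sqrt ((D.rank : ℝ) * fnorm D ^ 2) := Real.sqrt_le_sqrt hkey
    _ = Real.sqrt (D.rank) * fnorm D := by
        rw [Real.sqrt_mul (Nat.cast_nonneg _), Real.sqrt_sq (fnorm_nonneg D)]

lemma rank_sub_le (A B : Matrix (Fin N) (Fin T) ℝ) : (A - B).rank ≤ A.rank + B.rank := by
  have h : (A - B).mulVecLin = A.mulVecLin - B.mulVecLin := by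
    ext x
    simp [Matrix.sub_mulVec]
  have hle : LinearMap.range (A - B).mulVecLin ≤
      LinearMap.range A.mulVecLin ⊔ LinearMap.range B.mulVecLin := by
    rintro y ⟨x, rfl⟩
    rw [h]
    simp only [LinearMap.sub_apply]
    exact Submodule.sub_mem _ (Submodule.mem_sup_left (LinearMap.mem_range_self _ x))
      (Submodule.mem_sup_right (LinearMap.mem_range_self _ x))
  calc (A - B).rank
      ≤ Module.finrank ℝ ↥(LinearMap.range A.mulVecLin ⊔ LinearMap.range B.mulVecLin) :=
        Submodule.finrank_mono hle
    _ ≤ A.rank + B.rank := Submodule.finrank_add_le_finrank_add_finrank _ _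

end NNBound

/-- Nuclear-norm bound on the error of the rank-constrained least-squares estimate of the
interactive fixed effects, given plug-in regression coefficients `β̂, δ̂`. -/
theorem nuclear_norm_bound_plugin_factor_estimate {N T K : ℕ} (R : ℕ)
    (X : Matrix (Fin N) (Fin T) ℝ) (Z : Fin K → Matrix (Fin N) (Fin T) ℝ)
    (Γ U Γhat Y : Matrix (Fin N) (Fin T) ℝ)
    (β βhat : ℝ) (δ δhat : Fin K → ℝ)
    (hΓ : Γ.rank ≤ R) (hΓhat : Γhat.rank ≤ R)
    (hY : Y = β • X + ∑ k, δ k • Z k + Γ + U)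
    (hmin : ∀ G : Matrix (Fin N) (Fin T) ℝ, G.rank ≤ R →
      (fnorm (Y - βhat • X - ∑ k, δhat k • Z k - Γhat)) ^ 2 ≤
      (fnorm (Y - βhat • X - ∑ k, δhat k • Z k - G)) ^ 2) :
    nucNorm (Γhat - Γ) ≤
      4 * (R : ℝ) * (s1 U + s1 X * |βhat - β| + ∑ k, s1 (Z k) * |δhat k - δ k|) := by
  classical
  set E : Matrix (Fin N) (Fin T) ℝ := U + (β - βhat) • X + ∑ k, (δ k - δhat k) • Z k with hE
  have hsum : ∑ k, (δ k - δhat k) • Z k = (∑ k, δ k • Z k) - ∑ k, δhat k • Z k := by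
    rw [← Finset.sum_sub_distrib]
    exact Finset.sum_congr rfl fun k _ => sub_smul _ _ _
  have hrw : ∀ G : Matrix (Fin N) (Fin T) ℝ,
      Y - βhat • X - (∑ k, δhat k • Z k) - G = (Γ - G) + E := by
    intro G
    rw [hY, hE, hsum]
    module
  have hbase := hmin Γ hΓ
  rw [hrw Γ, hrw Γhat, sub_self, zero_add] at hbase
  set D := Γhat - Γ with hD
  have hPD : Γ - Γhat = -D := by rw [hD, neg_sub]
  rw [NNBound.sq_fnorm, NNBound.sq_fnorm, hPD, NNBound.finner_expand] at hbase
  have key : finner D D ≤ 2 * finner D E := by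
    have h1 : finner (-D) (-D) = finner D D := NNBound.finner_neg_neg D D
    have h2 : finner (-D) E = - finner D E := NNBound.finner_neg_left D E
    rw [h1, h2] at hbase
    linarith
  have hvn := NNBound.finner_le_nuc_s1 D E
  have hrankNat : D.rank ≤ 2 * R := by
    have h1 := NNBound.rank_sub_le Γhat Γ
    rw [← hD] at h1
    omega
  have hrank : ((D.rank : ℝ)) ≤ 2 * (R : ℝ) := by
    have h1 := (Nat.cast_le (α := ℝ)).mpr hrankNat
    push_cast at h1
    exact h1
  set r := Real.sqrt (2 * (R : ℝ)) with hr
  have hr2 : r ^ 2 = 2 * (R : ℝ) := Real.sq_sqrt (by positivity)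
  have hnuc_f : nucNorm D ≤ r * fnorm D := by
    calc nucNorm D ≤ Real.sqrt (D.rank) * fnorm D := NNBound.nucNorm_le_sqrt_rank D
      _ ≤ r * fnorm D :=
        mul_le_mul_of_nonneg_right (Real.sqrt_le_sqrt hrank) (NNBound.fnorm_nonneg D)
  have hfD : fnorm D ^ 2 = finner D D := NNBound.sq_fnorm D
  have hsE : 0 ≤ s1 E := NNBound.s1_nonneg E
  have hEbound : s1 E ≤ s1 U + s1 X * |βhat - β| + ∑ k, s1 (Z k) * |δhat k - δ k| := by
    rw [hE]
    calc s1 (U + (β - βhat) • X + ∑ k, (δ k - δhat k) • Z k)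
        ≤ s1 (U + (β - βhat) • X) + s1 (∑ k, (δ k - δhat k) • Z k) := NNBound.s1_add_le _ _
      _ ≤ (s1 U + s1 ((β - βhat) • X)) + ∑ k, s1 ((δ k - δhat k) • Z k) :=
          add_le_add (NNBound.s1_add_le _ _) (NNBound.s1_sum_le _)
      _ ≤ (s1 U + |β - βhat| * s1 X) + ∑ k, |δ k - δhat k| * s1 (Z k) :=
          add_le_add (add_le_add le_rfl (NNBound.s1_smul_le _ _))
            (Finset.sum_le_sum fun k _ => NNBound.s1_smul_le _ _)
      _ = s1 U + s1 X * |βhat - β| + ∑ k, s1 (Z k) * |δhat k - δ k| := by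
          have h1 : |β - βhat| * s1 X = s1 X * |βhat - β| := by rw [abs_sub_comm, mul_comm]
          have h2 : ∀ k, |δ k - δhat k| * s1 (Z k) = s1 (Z k) * |δhat k - δ k| := fun k => by
            rw [abs_sub_comm, mul_comm]
          rw [h1, Finset.sum_congr rfl fun k _ => h2 k]
  have hRHS0 : 0 ≤ s1 U + s1 X * |βhat - β| + ∑ k, s1 (Z k) * |δhat k - δ k| :=
    add_nonneg (add_nonneg (NNBound.s1_nonneg U)
        (mul_nonneg (NNBound.s1_nonneg X) (abs_nonneg _)))
      (Finset.sum_nonneg fun k _ => mul_nonneg (NNBound.s1_nonneg (Z k)) (abs_nonneg _))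
  by_cases hf : fnorm D = 0
  · have h0 : nucNorm D ≤ 0 := by
      have := hnuc_f
      rw [hf, mul_zero] at this
      exact this
    calc nucNorm D ≤ 0 := h0
      _ ≤ 4 * (R : ℝ) * (s1 U + s1 X * |βhat - β| + ∑ k, s1 (Z k) * |δhat k - δ k|) :=
        mul_nonneg (by positivity) hRHS0
  · have hfpos : 0 < fnorm D := lt_of_le_of_ne (NNBound.fnorm_nonneg D) (Ne.symm hf)
    have hchain : fnorm D ^ 2 ≤ (2 * (s1 E * r)) * fnorm D := by
      calc fnorm D ^ 2 = finner D D := hfD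
        _ ≤ 2 * finner D E := key
        _ ≤ 2 * (nucNorm D * s1 E) := by linarith
        _ ≤ 2 * ((r * fnorm D) * s1 E) := by
            have := mul_le_mul_of_nonneg_right hnuc_f hsE
            linarith
        _ = (2 * (s1 E * r)) * fnorm D := by ring
    have hfle : fnorm D ≤ 2 * (s1 E * r) := by
      rw [pow_two] at hchain
      exact le_of_mul_le_mul_right (by linarith) hfpos
    have hnuc : nucNorm D ≤ 4 * (R : ℝ) * s1 E := by
      calc nucNorm D ≤ r * fnorm D := hnuc_f
        _ ≤ r * (2 * (s1 E * r)) := mul_le_mul_of_nonneg_left hfle (Real.sqrt_nonneg _)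
        _ = 2 * r ^ 2 * s1 E := by ring
        _ = 4 * (R : ℝ) * s1 E := by rw [hr2]; ring
    calc nucNorm D ≤ 4 * (R : ℝ) * s1 E := hnuc
      _ ≤ 4 * (R : ℝ) * (s1 U + s1 X * |βhat - β| + ∑ k, s1 (Z k) * |δhat k - δ k|) :=
        mul_le_mul_of_nonneg_left hEbound (by positivity)

end
end

section
/- Let X be a real N×T matrix with singular value decomposition X = V S Wᵀ, where V is an N×N orthogonal matrix, W is a T×T orthogonal matrix, and S is the N×T rectangular diagonal matrix whose j-th diagonal entry is the j-th singular value s_j(X) (in decreasing order). For μ > 0, let S̃(μ) be the N×T rectangular diagonal matrix with j-th diagonal entry max{s_j(X) − μ, 0}. Then Π*_μ = V S̃(μ) Wᵀ is the unique minimizer over Π ∈ ℝ^{N×T} of ½ ‖X − Π‖_F² + μ ‖Π‖_*. -/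
open scoped BigOperators

noncomputable section

namespace SoftThreshAux

open Matrix

variable {N T : ℕ}

lemma finner_self_nonneg (A : Matrix (Fin N) (Fin T) ℝ) : 0 ≤ finner A A :=
  Finset.sum_nonneg fun _ _ => Finset.sum_nonneg fun _ _ => mul_self_nonneg _

lemma fnorm_sq (A : Matrix (Fin N) (Fin T) ℝ) : fnorm A ^ 2 = finner A A :=
  Real.sq_sqrt (finner_self_nonneg A)

lemma finner_eq_trace (A B : Matrix (Fin N) (Fin T) ℝ) :
    finner A B = Matrix.trace (A * Bᵀ) := by
  simp [finner, Matrix.trace, Matrix.diag, Matrix.mul_apply]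

lemma finner_sub_right (A B C : Matrix (Fin N) (Fin T) ℝ) :
    finner A (B - C) = finner A B - finner A C := by
  simp [finner, mul_sub, Finset.sum_sub_distrib]

lemma finner_expand (G H : Matrix (Fin N) (Fin T) ℝ) :
    finner (G - H) (G - H) = finner G G - 2 * finner G H + finner H H := by
  have h : ∀ (i : Fin N) (t : Fin T), (G - H) i t * (G - H) i t =
      G i t * G i t - 2 * (G i t * H i t) + H i t * H i t := by
    intro i t; simp [Matrix.sub_apply]; ring
  simp only [finner, h, Finset.sum_add_distrib, Finset.sum_sub_distrib, ← Finset.mul_sum]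

lemma finner_eq_zero {H : Matrix (Fin N) (Fin T) ℝ} (h : finner H H = 0) : H = 0 := by
  ext i t
  have h1 : ∀ i ∈ (Finset.univ : Finset (Fin N)), (0:ℝ) ≤ ∑ t, H i t * H i t :=
    fun i _ => Finset.sum_nonneg fun t _ => mul_self_nonneg _
  have h2 := (Finset.sum_eq_zero_iff_of_nonneg h1).mp h i (Finset.mem_univ i)
  have h3 := (Finset.sum_eq_zero_iff_of_nonneg
    (fun t _ => mul_self_nonneg (H i t))).mp h2 t (Finset.mem_univ t)
  simpa [mul_self_eq_zero] using h3

lemma sandwich {V : Matrix (Fin N) (Fin N) ℝ} {W : Matrix (Fin T) (Fin T) ℝ}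
    (hW : Wᵀ * W = 1) (A B : Matrix (Fin N) (Fin T) ℝ) :
    (V * A * Wᵀ) * (V * B * Wᵀ)ᵀ = V * (A * Bᵀ) * Vᵀ := by
  simp only [transpose_mul, transpose_transpose, Matrix.mul_assoc]
  rw [← Matrix.mul_assoc Wᵀ W, hW, Matrix.one_mul]

lemma finner_conj {V : Matrix (Fin N) (Fin N) ℝ} {W : Matrix (Fin T) (Fin T) ℝ}
    (hV : Vᵀ * V = 1) (hW : Wᵀ * W = 1) (A B : Matrix (Fin N) (Fin T) ℝ) :
    finner (V * A * Wᵀ) (V * B * Wᵀ) = finner A B := by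
  rw [finner_eq_trace, finner_eq_trace, sandwich hW, Matrix.trace_mul_comm,
    ← Matrix.mul_assoc, ← Matrix.mul_assoc, hV, Matrix.one_mul]

lemma entry_transpose_mul {n m : ℕ} (B C : Matrix (Fin n) (Fin m) ℝ) (j : Fin m) :
    (Bᵀ * C) j j = ∑ t, B t j * C t j := by
  simp [Matrix.mul_apply]

lemma entry_conj_diag {n : ℕ} (Q : Matrix (Fin n) (Fin n) ℝ) (g : Fin n → ℝ) (j : Fin n) :
    (Qᵀ * Matrix.diagonal g * Q) j j = ∑ i, g i * (Q i j)^2 := by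
  simp only [Matrix.mul_apply, Matrix.transpose_apply, Matrix.diagonal_apply, mul_ite,
    ite_mul, mul_zero, zero_mul, Finset.sum_ite_eq, Finset.sum_ite_eq', Finset.mem_univ, if_true]
  refine Finset.sum_congr rfl fun k _ => by ring

lemma entry_diag_conj {n : ℕ} (Q : Matrix (Fin n) (Fin n) ℝ) (g : Fin n → ℝ) (i : Fin n) :
    (Q * Matrix.diagonal g * Qᵀ) i i = ∑ j, g j * (Q i j)^2 := by
  simp only [Matrix.mul_apply, Matrix.transpose_apply, Matrix.diagonal_apply, mul_ite,
    ite_mul, mul_zero, zero_mul, Finset.sum_ite_eq, Finset.sum_ite_eq', Finset.mem_univ, if_true]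
  refine Finset.sum_congr rfl fun k _ => by ring

lemma entry_self_transpose {n : ℕ} (Q : Matrix (Fin n) (Fin n) ℝ) (i : Fin n) :
    (Q * Qᵀ) i i = ∑ j, (Q i j)^2 := by
  simp [Matrix.mul_apply, pow_two]

lemma sum_weighted_le_sqrt {n : ℕ} (w c : Fin n → ℝ) (hw : ∀ j, 0 ≤ w j)
    (hw1 : ∑ j, w j = 1) (hc : ∀ j, 0 ≤ c j) :
    ∑ j, w j * c j ≤ Real.sqrt (∑ j, w j * (c j)^2) := by
  have key := Finset.sum_mul_sq_le_sq_mul_sq Finset.univ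
    (fun j => Real.sqrt (w j)) (fun j => Real.sqrt (w j) * c j)
  have e1 : ∀ j : Fin n, Real.sqrt (w j) * (Real.sqrt (w j) * c j) = w j * c j := by
    intro j; rw [← mul_assoc, Real.mul_self_sqrt (hw j)]
  have e2 : ∀ j : Fin n, Real.sqrt (w j) ^ 2 = w j := fun j => Real.sq_sqrt (hw j)
  have e3 : ∀ j : Fin n, (Real.sqrt (w j) * c j) ^ 2 = w j * (c j)^2 := by
    intro j; rw [mul_pow, e2]
  simp only [e1, e2, e3, hw1, one_mul] at key
  exact Real.le_sqrt_of_sq_le key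

lemma sum_mul_le_sqrt_mul_sqrt {n : ℕ} (f h : Fin n → ℝ) :
    ∑ t, f t * h t ≤ Real.sqrt (∑ t, f t ^ 2) * Real.sqrt (∑ t, h t ^ 2) := by
  have key := Finset.sum_mul_sq_le_sq_mul_sq Finset.univ f h
  have h2 := Real.le_sqrt_of_sq_le key
  rwa [Real.sqrt_mul (Finset.sum_nonneg fun t _ => sq_nonneg (f t))] at h2

lemma spectral_real {n : ℕ} (P : Matrix (Fin n) (Fin n) ℝ) (hP : P.IsHermitian) :
    ∃ U : Matrix (Fin n) (Fin n) ℝ, Uᵀ*U = 1 ∧ U*Uᵀ = 1 ∧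
      P = U * Matrix.diagonal hP.eigenvalues * Uᵀ := by
  refine ⟨(IsHermitian.eigenvectorUnitary hP : Matrix (Fin n) (Fin n) ℝ), ?_, ?_, ?_⟩
  · have := Matrix.mem_unitaryGroup_iff'.mp (IsHermitian.eigenvectorUnitary hP).2
    rwa [Matrix.star_eq_conjTranspose, conjTranspose_eq_transpose_of_trivial] at this
  · have := Matrix.mem_unitaryGroup_iff.mp (IsHermitian.eigenvectorUnitary hP).2
    rwa [Matrix.star_eq_conjTranspose, conjTranspose_eq_transpose_of_trivial] at this
  · have h := hP.spectral_theorem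
    rw [Unitary.conjStarAlgAut_apply, Matrix.star_eq_conjTranspose, conjTranspose_eq_transpose_of_trivial] at h
    convert h using 3 <;> rfl

lemma nucNorm_eq (A : Matrix (Fin N) (Fin T) ℝ) :
    nucNorm A = ∑ j : Fin N,
      Real.sqrt ((Matrix.isHermitian_mul_conjTranspose_self A).eigenvalues j) := by
  rw [nucNorm, Finset.sum_range fun j => sval A j]
  have h1 : ∀ j : Fin N, sval A (j : ℕ) =
      Real.sqrt ((Matrix.isHermitian_mul_conjTranspose_self A).eigenvalues
        (Tuple.sort ((Matrix.isHermitian_mul_conjTranspose_self A).eigenvalues)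
          (Fin.rev j))) := by
    intro j
    rw [sval, dif_pos j.isLt]
  simp only [h1]
  exact Equiv.sum_comp (Fin.revPerm.trans
    (Tuple.sort ((Matrix.isHermitian_mul_conjTranspose_self A).eigenvalues)))
    (fun k => Real.sqrt ((Matrix.isHermitian_mul_conjTranspose_self A).eigenvalues k))

lemma mul_conjT_eq_mul_transpose (A : Matrix (Fin N) (Fin T) ℝ) : A * Aᴴ = A * Aᵀ := by
  rw [conjTranspose_eq_transpose_of_trivial]

/-- Key inequality: if `G Gᵀ = V diag g Vᵀ` with `0 ≤ g ≤ μ²`, then `⟨G, A⟩_F ≤ μ‖A‖₊`. -/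
lemma finner_le_mu_nucNorm (G A : Matrix (Fin N) (Fin T) ℝ) (μ : ℝ) (hμ : 0 ≤ μ)
    (V : Matrix (Fin N) (Fin N) ℝ) (g : Fin N → ℝ)
    (hV1 : Vᵀ * V = 1) (hV2 : V * Vᵀ = 1)
    (hg0 : ∀ i, 0 ≤ g i) (hgμ : ∀ i, g i ≤ μ^2)
    (hGG : G * Gᵀ = V * Matrix.diagonal g * Vᵀ) :
    finner G A ≤ μ * nucNorm A := by
  obtain ⟨U, hU1, hU2, hUspec⟩ :=
    spectral_real _ (Matrix.isHermitian_mul_conjTranspose_self A)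
  set eig := (Matrix.isHermitian_mul_conjTranspose_self A).eigenvalues with heigdef
  rw [mul_conjT_eq_mul_transpose] at hUspec
  have heig : ∀ j, 0 ≤ eig j := Matrix.eigenvalues_self_mul_conjTranspose_nonneg A
  set Q := Vᵀ * U with hQdef
  have hQ1 : Qᵀ * Q = 1 := by
    rw [hQdef, transpose_mul, transpose_transpose, Matrix.mul_assoc,
      ← Matrix.mul_assoc V Vᵀ U, hV2, Matrix.one_mul, hU1]
  -- step a : finner G A = ∑ j, diag entries
  have stepa : finner G A = ∑ j, ((Gᵀ*U)ᵀ * (Aᵀ*U)) j j := by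
    have e : (Gᵀ*U)ᵀ * (Aᵀ*U) = Uᵀ * (G * Aᵀ * U) := by
      simp only [transpose_mul, transpose_transpose, Matrix.mul_assoc]
    have e2 : ∑ j, ((Gᵀ*U)ᵀ * (Aᵀ*U)) j j = Matrix.trace ((Gᵀ*U)ᵀ * (Aᵀ*U)) := by
      simp [Matrix.trace, Matrix.diag]
    rw [e2, e, Matrix.trace_mul_comm, Matrix.mul_assoc, hU2, Matrix.mul_one,
      finner_eq_trace]
  -- step b : column norms of AᵀU are eigenvalues
  have stepb : (Aᵀ*U)ᵀ * (Aᵀ*U) = Matrix.diagonal eig := by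
    have e : (Aᵀ*U)ᵀ * (Aᵀ*U) = Uᵀ * ((A * Aᵀ) * U) := by
      simp only [transpose_mul, transpose_transpose, Matrix.mul_assoc]
    rw [e, hUspec]
    rw [Matrix.mul_assoc (U * Matrix.diagonal eig) Uᵀ U, hU1, Matrix.mul_one,
      ← Matrix.mul_assoc, hU1, Matrix.one_mul]
  -- step c : column norms of GᵀU
  have stepc : (Gᵀ*U)ᵀ * (Gᵀ*U) = Qᵀ * Matrix.diagonal g * Q := by
    have e : (Gᵀ*U)ᵀ * (Gᵀ*U) = Uᵀ * ((G * Gᵀ) * U) := by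
      simp only [transpose_mul, transpose_transpose, Matrix.mul_assoc]
    rw [e, hGG, hQdef]
    simp only [transpose_mul, transpose_transpose, Matrix.mul_assoc]
  have colG : ∀ j, ∑ t, ((Gᵀ*U) t j)^2 ≤ μ^2 := by
    intro j
    have e1 : ∑ t, ((Gᵀ*U) t j)^2 = ((Gᵀ*U)ᵀ * (Gᵀ*U)) j j := by
      rw [entry_transpose_mul]
      exact Finset.sum_congr rfl fun t _ => pow_two _
    rw [e1, stepc, entry_conj_diag]
    have e2 : (1 : Matrix (Fin N) (Fin N) ℝ) j j = ∑ i, (Q i j)^2 := by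
      rw [← hQ1]; rw [entry_transpose_mul]
      exact Finset.sum_congr rfl fun t _ => (pow_two _).symm
    have e3 : ∑ i, (Q i j)^2 = 1 := by
      rw [← e2, Matrix.one_apply_eq]
    calc ∑ i, g i * (Q i j)^2 ≤ ∑ i, μ^2 * (Q i j)^2 :=
          Finset.sum_le_sum fun i _ => mul_le_mul_of_nonneg_right (hgμ i) (sq_nonneg _)
      _ = μ^2 := by rw [← Finset.mul_sum, e3, mul_one]
  have colA : ∀ j, ∑ t, ((Aᵀ*U) t j)^2 = eig j := by
    intro j
    have e1 : ∑ t, ((Aᵀ*U) t j)^2 = ((Aᵀ*U)ᵀ * (Aᵀ*U)) j j := by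
      rw [entry_transpose_mul]
      exact Finset.sum_congr rfl fun t _ => pow_two _
    rw [e1, stepb, Matrix.diagonal_apply_eq]
  -- per-column Cauchy--Schwarz
  have percol : ∀ j, ((Gᵀ*U)ᵀ * (Aᵀ*U)) j j ≤ μ * Real.sqrt (eig j) := by
    intro j
    rw [entry_transpose_mul]
    calc ∑ t, (Gᵀ*U) t j * (Aᵀ*U) t j
        ≤ Real.sqrt (∑ t, ((Gᵀ*U) t j)^2) * Real.sqrt (∑ t, ((Aᵀ*U) t j)^2) :=
          sum_mul_le_sqrt_mul_sqrt _ _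
      _ ≤ μ * Real.sqrt (eig j) := by
          rw [colA j]
          apply mul_le_mul_of_nonneg_right _ (Real.sqrt_nonneg _)
          calc Real.sqrt (∑ t, ((Gᵀ*U) t j)^2) ≤ Real.sqrt (μ^2) :=
                Real.sqrt_le_sqrt (colG j)
            _ = μ := Real.sqrt_sq hμ
  rw [stepa, nucNorm_eq, Finset.mul_sum]
  exact Finset.sum_le_sum fun j _ => percol j

/-- If `A Aᵀ = V diag m Vᵀ` with `m ≥ 0`, then `‖A‖₊ ≤ ∑ √(m i)`. -/
lemma nucNorm_le_of_diag (A : Matrix (Fin N) (Fin T) ℝ) (V : Matrix (Fin N) (Fin N) ℝ)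
    (m : Fin N → ℝ) (hV1 : Vᵀ*V = 1) (hV2 : V*Vᵀ = 1) (hm : ∀ i, 0 ≤ m i)
    (hAA : A * Aᵀ = V * Matrix.diagonal m * Vᵀ) :
    nucNorm A ≤ ∑ i, Real.sqrt (m i) := by
  obtain ⟨U, hU1, hU2, hUspec⟩ :=
    spectral_real _ (Matrix.isHermitian_mul_conjTranspose_self A)
  set eig := (Matrix.isHermitian_mul_conjTranspose_self A).eigenvalues with heigdef
  rw [mul_conjT_eq_mul_transpose] at hUspec
  have heig : ∀ j, 0 ≤ eig j := Matrix.eigenvalues_self_mul_conjTranspose_nonneg A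
  set Q := Vᵀ * U with hQdef
  have hQ1 : Qᵀ * Q = 1 := by
    rw [hQdef, transpose_mul, transpose_transpose, Matrix.mul_assoc,
      ← Matrix.mul_assoc V Vᵀ U, hV2, Matrix.one_mul, hU1]
  have hQ2 : Q * Qᵀ = 1 := mul_eq_one_comm.mp hQ1
  have hdm : Matrix.diagonal m = Q * Matrix.diagonal eig * Qᵀ := by
    have e : Matrix.diagonal m = Vᵀ * (V * Matrix.diagonal m * Vᵀ) * V := by
      rw [Matrix.mul_assoc, Matrix.mul_assoc, hV1, Matrix.mul_one, ← Matrix.mul_assoc,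
        hV1, Matrix.one_mul]
    rw [e, ← hAA, hUspec, hQdef]
    simp only [transpose_mul, transpose_transpose, Matrix.mul_assoc]
  have rowQ : ∀ i, ∑ j, (Q i j)^2 = 1 := by
    intro i
    have := entry_self_transpose Q i
    rw [hQ2, Matrix.one_apply_eq] at this
    exact this.symm
  have colQ : ∀ j, ∑ i, (Q i j)^2 = 1 := by
    intro j
    have e2 : (1 : Matrix (Fin N) (Fin N) ℝ) j j = ∑ i, (Q i j)^2 := by
      rw [← hQ1, entry_transpose_mul]
      exact Finset.sum_congr rfl fun t _ => (pow_two _).symm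
    rw [← e2, Matrix.one_apply_eq]
  have key : ∀ i, ∑ j, (Q i j)^2 * Real.sqrt (eig j) ≤ Real.sqrt (m i) := by
    intro i
    have hmi : m i = ∑ j, eig j * (Q i j)^2 := by
      have := congrArg (fun M => M i i) hdm
      simpa [Matrix.diagonal_apply_eq, entry_diag_conj] using this
    have := sum_weighted_le_sqrt (fun j => (Q i j)^2) (fun j => Real.sqrt (eig j))
      (fun j => sq_nonneg _) (rowQ i) (fun j => Real.sqrt_nonneg _)
    have e : ∑ j, (Q i j)^2 * (Real.sqrt (eig j))^2 = m i := by
      rw [hmi]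
      exact Finset.sum_congr rfl fun j _ => by
        rw [Real.sq_sqrt (heig j)]; ring
    rwa [e] at this
  calc nucNorm A = ∑ j, Real.sqrt (eig j) := nucNorm_eq A
    _ = ∑ j, (∑ i, (Q i j)^2) * Real.sqrt (eig j) := by
        exact Finset.sum_congr rfl fun j _ => by rw [colQ j, one_mul]
    _ = ∑ i, ∑ j, (Q i j)^2 * Real.sqrt (eig j) := by
        rw [Finset.sum_comm]
        exact Finset.sum_congr rfl fun j _ => by rw [Finset.sum_mul]
    _ ≤ ∑ i, Real.sqrt (m i) := Finset.sum_le_sum fun i _ => key i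

lemma pdiag_mul_transpose (A B : Matrix (Fin N) (Fin T) ℝ)
    (hA : ∀ (i : Fin N) (t : Fin T), (i:ℕ) ≠ (t:ℕ) → A i t = 0)
    (hB : ∀ (i : Fin N) (t : Fin T), (i:ℕ) ≠ (t:ℕ) → B i t = 0) :
    A * Bᵀ = Matrix.diagonal (fun i => ∑ t, A i t * B i t) := by
  ext i k
  by_cases h : i = k
  · subst h; simp [Matrix.mul_apply]
  · rw [Matrix.mul_apply, Matrix.diagonal_apply_ne _ h]
    apply Finset.sum_eq_zero; intro t _
    by_cases hit : (i:ℕ) = (t:ℕ)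
    · have hkt : (k:ℕ) ≠ (t:ℕ) := by
        intro hc; exact h (Fin.ext (hit.trans hc.symm))
      rw [Matrix.transpose_apply, hB k t hkt, mul_zero]
    · rw [hA i t hit, zero_mul]
  
lemma sum_ite_coe (i : Fin N) (f : Fin T → ℝ) :
    (∑ t : Fin T, if (i:ℕ) = (t:ℕ) then f t else 0) =
    if h : (i:ℕ) < T then f ⟨(i:ℕ), h⟩ else 0 := by
  split_ifs with h
  · rw [Finset.sum_eq_single (⟨(i:ℕ), h⟩ : Fin T)]
    · simp
    · intro t _ ht
      rw [if_neg]
      intro hc; exact ht (Fin.ext hc.symm)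
    · intro hmem; exact absurd (Finset.mem_univ _) hmem
  · apply Finset.sum_eq_zero; intro t _
    rw [if_neg]
    intro hc; exact h (hc ▸ t.isLt)

lemma sval_nonneg (A : Matrix (Fin N) (Fin T) ℝ) (j : ℕ) : 0 ≤ sval A j := by
  rw [sval]; split
  · exact Real.sqrt_nonneg _
  · exact le_refl 0

end SoftThreshAux

open Matrix in
/-- Singular-value soft-thresholding: given an SVD `X = V S Wᵀ`, the matrix
`Π*_μ = V S̃(μ) Wᵀ` (with singular values soft-thresholded at `μ`) is the unique minimizer of
`½‖X − Π‖_F² + μ‖Π‖_*`. -/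
theorem soft_thresholding_unique_minimizer {N T : ℕ}
    (X : Matrix (Fin N) (Fin T) ℝ)
    (V : Matrix (Fin N) (Fin N) ℝ) (W : Matrix (Fin T) (Fin T) ℝ)
    (S : Matrix (Fin N) (Fin T) ℝ)
    (hV : Vᵀ * V = 1) (hW : Wᵀ * W = 1)
    (hS : ∀ (i : Fin N) (t : Fin T), S i t = if (i : ℕ) = (t : ℕ) then sval X (i : ℕ) else 0)
    (hX : X = V * S * Wᵀ)
    (μ : ℝ) (hμ : 0 < μ)
    (Stil : Matrix (Fin N) (Fin T) ℝ)
    (hStil : ∀ (i : Fin N) (t : Fin T),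
      Stil i t = if (i : ℕ) = (t : ℕ) then max (sval X (i : ℕ) - μ) 0 else 0) :
    (∀ Pi' : Matrix (Fin N) (Fin T) ℝ,
        (1 / 2) * (fnorm (X - V * Stil * Wᵀ)) ^ 2 + μ * nucNorm (V * Stil * Wᵀ) ≤
        (1 / 2) * (fnorm (X - Pi')) ^ 2 + μ * nucNorm Pi') ∧
    (∀ Pi' : Matrix (Fin N) (Fin T) ℝ,
        (1 / 2) * (fnorm (X - Pi')) ^ 2 + μ * nucNorm Pi' =
        (1 / 2) * (fnorm (X - V * Stil * Wᵀ)) ^ 2 + μ * nucNorm (V * Stil * Wᵀ) →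
        Pi' = V * Stil * Wᵀ) := by
  classical
  open SoftThreshAux in
  -- notation
  set Pi : Matrix (Fin N) (Fin T) ℝ := V * Stil * Wᵀ with hPidef
  have hV2 : V * Vᵀ = 1 := mul_eq_one_comm.mp hV
  set s : Fin N → ℝ := fun i => sval X (i : ℕ) with hsdef
  have hs0 : ∀ i, 0 ≤ s i := fun i => SoftThreshAux.sval_nonneg X i
  set m : Fin N → ℝ := fun i => max (s i - μ) 0 with hmdef
  have hm0 : ∀ i, 0 ≤ m i := fun i => le_max_right _ _
  set d : Fin N → ℝ := fun i => s i - m i with hddef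
  have hd0 : ∀ i, 0 ≤ d i := by
    intro i
    have h1 : m i ≤ s i := max_le (by linarith [hμ.le]) (hs0 i)
    simp only [hddef]; linarith
  have hdμ : ∀ i, d i ≤ μ := by
    intro i
    have h1 := le_max_left (s i - μ) 0
    simp only [hddef, hmdef]; linarith
  have hdm : ∀ i, d i * m i = μ * m i := by
    intro i
    rcases le_or_gt (s i) μ with h | h
    · have : m i = 0 := max_eq_right (by linarith)
      rw [this, mul_zero, mul_zero]
    · have hmi : m i = s i - μ := max_eq_left (by linarith)
      have : d i = μ := by simp only [hddef, hmi]; ring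
      rw [this]
  set D : Matrix (Fin N) (Fin T) ℝ := S - Stil with hDdef
  have hDent : ∀ i t, D i t = if (i:ℕ) = (t:ℕ) then d i else 0 := by
    intro i t
    simp only [hDdef, Matrix.sub_apply, hS i t, hStil i t]
    split_ifs with h
    · rfl
    · ring
  have hStilent : ∀ i t, Stil i t = if (i:ℕ) = (t:ℕ) then m i else 0 := hStil
  -- G = X - Pi
  have hG : X - Pi = V * D * Wᵀ := by
    rw [hX, hPidef, hDdef, Matrix.mul_sub, Matrix.sub_mul]
  set G : Matrix (Fin N) (Fin T) ℝ := V * D * Wᵀ with hGdef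
  -- D * Dᵀ diagonal
  set g : Fin N → ℝ := fun i => ∑ t, D i t * D i t with hgdef
  have hDD : D * Dᵀ = Matrix.diagonal g :=
    pdiag_mul_transpose D D (fun i t h => by rw [hDent i t, if_neg h])
      (fun i t h => by rw [hDent i t, if_neg h])
  have hgval : ∀ i, g i = if h : (i:ℕ) < T then d i * d i else 0 := by
    intro i
    have e : ∀ t : Fin T, D i t * D i t = if (i:ℕ) = (t:ℕ) then d i * d i else 0 := by
      intro t; rw [hDent i t]; split_ifs <;> ring
    simp only [hgdef, e]
    exact sum_ite_coe i _
  have hg0 : ∀ i, 0 ≤ g i := by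
    intro i; rw [hgval i]; split
    · exact mul_self_nonneg _
    · exact le_refl 0
  have hgμ : ∀ i, g i ≤ μ^2 := by
    intro i; rw [hgval i]; split
    · calc d i * d i ≤ μ * μ := mul_le_mul (hdμ i) (hdμ i) (hd0 i) hμ.le
        _ = μ^2 := (pow_two μ).symm
    · positivity
  have hGG : G * Gᵀ = V * Matrix.diagonal g * Vᵀ := by
    rw [hGdef, sandwich hW, hDD]
  -- Stil * Stilᵀ diagonal
  set gS : Fin N → ℝ := fun i => ∑ t, Stil i t * Stil i t with hgSdef
  have hSS : Stil * Stilᵀ = Matrix.diagonal gS :=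
    pdiag_mul_transpose Stil Stil (fun i t h => by rw [hStilent i t, if_neg h])
      (fun i t h => by rw [hStilent i t, if_neg h])
  have hgS0 : ∀ i, 0 ≤ gS i :=
    fun i => Finset.sum_nonneg fun t _ => mul_self_nonneg _
  have hPiPi : Pi * Piᵀ = V * Matrix.diagonal gS * Vᵀ := by
    rw [hPidef, sandwich hW, hSS]
  -- Bm and the three key facts
  set Bm : ℝ := ∑ i : Fin N, (if h : (i:ℕ) < T then m i else 0) with hBmdef
  have hsqrt_gS : ∀ i, Real.sqrt (gS i) = if h : (i:ℕ) < T then m i else 0 := by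
    intro i
    have e : ∀ t : Fin T, Stil i t * Stil i t = if (i:ℕ) = (t:ℕ) then m i * m i else 0 := by
      intro t; rw [hStilent i t]; split_ifs <;> ring
    have : gS i = if h : (i:ℕ) < T then m i * m i else 0 := by
      simp only [hgSdef, e]; exact sum_ite_coe i _
    rw [this]
    split_ifs with h
    · exact Real.sqrt_mul_self (hm0 i)
    · exact Real.sqrt_zero
  have key1 : nucNorm Pi ≤ Bm := by
    have := nucNorm_le_of_diag Pi V gS hV hV2 hgS0 hPiPi
    calc nucNorm Pi ≤ ∑ i, Real.sqrt (gS i) := this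
      _ = Bm := Finset.sum_congr rfl fun i _ => hsqrt_gS i
  have key2 : finner G Pi = μ * Bm := by
    rw [hGdef, hPidef, finner_conj hV hW]
    have e : ∀ (i : Fin N) (t : Fin T), D i t * Stil i t =
        if (i:ℕ) = (t:ℕ) then μ * m i else 0 := by
      intro i t
      rw [hDent i t, hStilent i t]
      split_ifs with h
      · exact hdm i
      · ring
    calc finner D Stil = ∑ i, ∑ t, D i t * Stil i t := rfl
      _ = ∑ i : Fin N, (if h : (i:ℕ) < T then μ * m i else 0) := by
          exact Finset.sum_congr rfl fun i _ => by
            simp only [e]; exact sum_ite_coe i _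
      _ = μ * Bm := by
          rw [hBmdef, Finset.mul_sum]
          exact Finset.sum_congr rfl fun i _ => by
            split_ifs <;> simp
  have key3 : ∀ Pi' : Matrix (Fin N) (Fin T) ℝ, finner G Pi' ≤ μ * nucNorm Pi' :=
    fun Pi' => finner_le_mu_nucNorm G Pi' μ hμ.le V g hV hV2 hg0 hgμ hGG
  -- main estimate
  have main : ∀ Pi' : Matrix (Fin N) (Fin T) ℝ,
      (1 / 2) * (fnorm (X - Pi)) ^ 2 + μ * nucNorm Pi + (1/2) * finner (Pi' - Pi) (Pi' - Pi) ≤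
      (1 / 2) * (fnorm (X - Pi')) ^ 2 + μ * nucNorm Pi' := by
    intro Pi'
    set H : Matrix (Fin N) (Fin T) ℝ := Pi' - Pi with hHdef
    have hsplit : X - Pi' = (X - Pi) - H := by rw [hHdef]; abel
    have hA : fnorm (X - Pi') ^ 2 =
        finner (X - Pi) (X - Pi) - 2 * finner (X - Pi) H + finner H H := by
      rw [fnorm_sq, hsplit, finner_expand]
    have hB : fnorm (X - Pi) ^ 2 = finner (X - Pi) (X - Pi) := fnorm_sq _
    have hGH : finner (X - Pi) H = finner G Pi' - finner G Pi := by
      rw [hHdef, hG, finner_sub_right]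
    have h1 : finner G Pi' ≤ μ * nucNorm Pi' := key3 Pi'
    have h5 : μ * nucNorm Pi ≤ μ * Bm := mul_le_mul_of_nonneg_left key1 hμ.le
    rw [hA, hB, hGH]
    linarith [key2]
  constructor
  · intro Pi'
    have := main Pi'
    have h4 : 0 ≤ finner (Pi' - Pi) (Pi' - Pi) := finner_self_nonneg _
    linarith
  · intro Pi' heq
    have := main Pi'
    have h4 : 0 ≤ finner (Pi' - Pi) (Pi' - Pi) := finner_self_nonneg _
    have hzero : finner (Pi' - Pi) (Pi' - Pi) = 0 := by linarith
    have := finner_eq_zero hzero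
    have : Pi' - Pi = 0 := this
    have : Pi' = Pi := by
      have := sub_eq_zero.mp this
      exact this
    exact this

end
end
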